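/- Let K ⊆ E ⊆ L be differential fields with L a strongly normal extension of K. Then the group Gal_U(L/E) of differential automorphisms of ⟨L, C_U⟩ fixing ⟨E, C_U⟩ is a subgroup of Gal_U(L/K); moreover if every element of Hom_K(E, U) maps ⟨E, C_U⟩ into itself (e.g., if E/K is strongly normal), then Gal_U(L/E) is a normal subgroup of Gal_U(L/K). -/

import Mathlib

/-- Let `K ⊆ E ⊆ L` be differential subfields of a differential field `U`,
with `L/K` strongly normal.  Then `Gal_U(L/E)` — the set of differential automorphisms of
`⟨L, C_U⟩` fixing `⟨E, C_U⟩` pointwise — is a subgroup of `Gal_U(L/K)`; moreover, if every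
differential `K`-embedding of `E` into `U` maps `E` into `⟨E, C_U⟩` (as holds when `E/K` is
strongly normal), then `Gal_U(L/E)` is a normal subgroup of `Gal_U(L/K)`. -/
theorem stmt8 {U : Type*} [Field U] [CharZero U]
    (D : U → U)
    (hadd : ∀ a b : U, D (a + b) = D a + D b)
    (hleib : ∀ a b : U, D (a * b) = a * D b + D a * b)
    (K E L : Subfield U) (hKE : K ≤ E) (hEL : E ≤ L)
    (hKD : ∀ x ∈ K, D x ∈ K) (hED : ∀ x ∈ E, D x ∈ E) (hLD : ∀ x ∈ L, D x ∈ L)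
    (CU : Subfield U) (hCU : ∀ x : U, x ∈ CU ↔ D x = 0)
    -- `L/K` strongly normal, in the form used in the paper: every differential
    -- `K`-embedding of `L` into `U` maps `L` into `⟨L, C_U⟩`:
    (hSNL : ∀ f : (↥L) →+* U,
      (∀ x y : ↥L, D (x : U) = (y : U) → D (f x) = f y) →
      (∀ x : ↥L, (x : U) ∈ K → f x = (x : U)) →
      ∀ x : ↥L, f x ∈ Subfield.closure ((L : Set U) ∪ (CU : Set U)))
    (LC EC KC : Subfield U)
    (hLC : LC = Subfield.closure ((L : Set U) ∪ (CU : Set U)))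
    (hEC : EC = Subfield.closure ((E : Set U) ∪ (CU : Set U)))
    (hKC : KC = Subfield.closure ((K : Set U) ∪ (CU : Set U)))
    (GalE GalK : Set (RingAut (↥LC)))
    (hGalE : GalE = {σ | (∀ x y : ↥LC, D (x : U) = (y : U) → D (σ x : U) = (σ y : U)) ∧
      (∀ x : ↥LC, (x : U) ∈ EC → σ x = x)})
    (hGalK : GalK = {σ | (∀ x y : ↥LC, D (x : U) = (y : U) → D (σ x : U) = (σ y : U)) ∧
      (∀ x : ↥LC, (x : U) ∈ KC → σ x = x)}) :
    (1 ∈ GalE) ∧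
    (∀ σ ∈ GalE, ∀ τ ∈ GalE, σ * τ ∈ GalE) ∧
    (∀ σ ∈ GalE, σ⁻¹ ∈ GalE) ∧
    GalE ⊆ GalK ∧
    ((∀ f : (↥E) →+* U,
        (∀ x y : ↥E, D (x : U) = (y : U) → D (f x) = f y) →
        (∀ x : ↥E, (x : U) ∈ K → f x = (x : U)) →
        ∀ x : ↥E, f x ∈ EC) →
      ∀ σ ∈ GalK, ∀ τ ∈ GalE, σ * τ * σ⁻¹ ∈ GalE) := by
  -- Basic consequences of the derivation axioms
  have hD0 : D 0 = 0 := by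
    have h := hadd 0 0
    rw [add_zero] at h
    exact left_eq_add.mp h
  have hD1 : D 1 = 0 := by
    have h := hleib 1 1
    rw [mul_one, one_mul, mul_one] at h
    exact left_eq_add.mp h
  have hDneg : ∀ a : U, D (-a) = -D a := by
    intro a
    have h := hadd a (-a)
    rw [add_neg_cancel, hD0] at h
    exact eq_neg_of_add_eq_zero_right h.symm
  have hDinv : ∀ a : U, a ≠ 0 → D a⁻¹ = -(D a) * (a⁻¹ * a⁻¹) := by
    intro a ha
    have h := hleib a a⁻¹
    rw [mul_inv_cancel₀ ha, hD1] at h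
    have h2 : a * D a⁻¹ = -(D a * a⁻¹) := eq_neg_of_add_eq_zero_left h.symm
    refine mul_left_cancel₀ ha ?_
    rw [h2]
    field_simp
  -- `LC` is stable under `D`
  have hLLC : L ≤ LC := by
    rw [hLC]; exact fun x hx => Subfield.subset_closure (Or.inl hx)
  have hCULC : CU ≤ LC := by
    rw [hLC]; exact fun x hx => Subfield.subset_closure (Or.inr hx)
  have hELC : E ≤ LC := hEL.trans hLLC
  have hECLC : EC ≤ LC := by
    rw [hEC, hLC]
    exact Subfield.closure_mono (Set.union_subset_union_left _ hEL)
  have hKCEC : KC ≤ EC := by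
    rw [hKC, hEC]
    exact Subfield.closure_mono (Set.union_subset_union_left _ hKE)
  have hKKC : K ≤ KC := by
    rw [hKC]; exact fun x hx => Subfield.subset_closure (Or.inl hx)
  have hCUEC : CU ≤ EC := by
    rw [hEC]; exact fun x hx => Subfield.subset_closure (Or.inr hx)
  have hLCD : ∀ x ∈ LC, D x ∈ LC := by
    let T : Subfield U :=
      { carrier := {x | x ∈ LC ∧ D x ∈ LC}
        zero_mem' := ⟨zero_mem _, by rw [hD0]; exact zero_mem _⟩
        one_mem' := ⟨one_mem _, by rw [hD1]; exact zero_mem _⟩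
        add_mem' := by
          rintro a b ⟨ha, ha'⟩ ⟨hb, hb'⟩
          exact ⟨add_mem ha hb, by rw [hadd]; exact add_mem ha' hb'⟩
        mul_mem' := by
          rintro a b ⟨ha, ha'⟩ ⟨hb, hb'⟩
          exact ⟨mul_mem ha hb, by
            rw [hleib]; exact add_mem (mul_mem ha hb') (mul_mem ha' hb)⟩
        neg_mem' := by
          rintro a ⟨ha, ha'⟩
          exact ⟨neg_mem ha, by rw [hDneg]; exact neg_mem ha'⟩
        inv_mem' := by
          rintro a ⟨ha, ha'⟩
          refine ⟨inv_mem ha, ?_⟩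
          by_cases h0 : a = 0
          · rw [h0, inv_zero, hD0]; exact zero_mem _
          · rw [hDinv a h0]
            exact mul_mem (neg_mem ha') (mul_mem (inv_mem ha) (inv_mem ha)) }
    have hle : LC ≤ T := by
      rw [hLC]
      refine Subfield.closure_le.mpr ?_
      rintro x (hx | hx)
      · exact ⟨hLLC hx, hLLC (hLD x hx)⟩
      · exact ⟨hCULC hx, by rw [(hCU x).mp hx]; exact zero_mem _⟩
    exact fun x hx => (hle hx).2
  -- inverse of a differential automorphism is differential
  have hdinv : ∀ σ : RingAut (↥LC),
      (∀ x y : ↥LC, D (x : U) = (y : U) → D (σ x : U) = (σ y : U)) →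
      ∀ x y : ↥LC, D (x : U) = (y : U) → D (σ⁻¹ x : U) = (σ⁻¹ y : U) := by
    intro σ hσ x y hxy
    have hb : D ((σ⁻¹ x : ↥LC) : U) ∈ LC := hLCD _ (σ⁻¹ x).2
    set b : ↥LC := ⟨D ((σ⁻¹ x : ↥LC) : U), hb⟩ with hbdef
    have h1 : D ((σ (σ⁻¹ x) : ↥LC) : U) = (σ b : U) := hσ (σ⁻¹ x) b rfl
    have h2 : σ (σ⁻¹ x) = x := σ.apply_symm_apply x
    rw [h2, hxy] at h1
    have h3 : σ b = y := Subtype.coe_injective h1.symm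
    have h4 : σ⁻¹ y = b := by rw [← h3]; exact σ.symm_apply_apply b
    rw [h4]
  -- inverse of an automorphism fixing a set fixes it too
  have hfinv : ∀ (F : Subfield U) (σ : RingAut (↥LC)),
      (∀ x : ↥LC, (x : U) ∈ F → σ x = x) →
      ∀ x : ↥LC, (x : U) ∈ F → σ⁻¹ x = x := by
    intro F σ hσ x hx
    calc σ⁻¹ x = σ⁻¹ (σ x) := by rw [hσ x hx]
    _ = x := σ.symm_apply_apply x
  subst hGalE hGalK
  refine ⟨⟨fun x y h => h, fun x _ => rfl⟩, ?_, ?_, ?_, ?_⟩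
  · rintro σ ⟨hσd, hσf⟩ τ ⟨hτd, hτf⟩
    refine ⟨fun x y h => hσd _ _ (hτd x y h), fun x hx => ?_⟩
    show σ (τ x) = x
    rw [hτf x hx, hσf x hx]
  · rintro σ ⟨hσd, hσf⟩
    exact ⟨hdinv σ hσd, hfinv EC σ hσf⟩
  · rintro σ ⟨hσd, hσf⟩
    exact ⟨hσd, fun x hx => hσf x (hKCEC hx)⟩
  · rintro hf σ ⟨hσd, hσf⟩ τ ⟨hτd, hτf⟩
    -- σ⁻¹ maps EC ∩ LC into EC
    have hσinvd := hdinv σ hσd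
    have key : ∀ x : ↥LC, (x : U) ∈ EC → ((σ⁻¹ x : ↥LC) : U) ∈ EC := by
      -- the restriction of σ⁻¹ to E, as a ring hom into U
      set f : (↥E) →+* U :=
        LC.subtype.comp (((σ⁻¹ : RingAut (↥LC)) : (↥LC) →+* (↥LC)).comp
          (Subfield.inclusion hELC)) with hfdef
      have hfapp : ∀ e : ↥E, f e = ((σ⁻¹ (⟨(e : U), hELC e.2⟩ : ↥LC) : ↥LC) : U) :=
        fun e => rfl
      have hfd : ∀ x y : ↥E, D (x : U) = (y : U) → D (f x) = f y := by
        intro x y h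
        rw [hfapp, hfapp]
        exact hσinvd ⟨(x : U), hELC x.2⟩ ⟨(y : U), hELC y.2⟩ h
      have hff : ∀ x : ↥E, (x : U) ∈ K → f x = (x : U) := by
        intro x hx
        rw [hfapp]
        have := hfinv KC σ hσf ⟨(x : U), hELC x.2⟩ (hKKC hx)
        rw [this]
      have hfE := hf f hfd hff
      -- subfield of elements of LC sent into EC by σ⁻¹
      let W : Subfield U :=
        { carrier := {u : U | ∃ h : u ∈ LC, ((σ⁻¹ (⟨u, h⟩ : ↥LC) : ↥LC) : U) ∈ EC}
          zero_mem' := ⟨zero_mem _, by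
            rw [show (⟨(0 : U), zero_mem _⟩ : ↥LC) = 0 from rfl, map_zero]
            exact zero_mem _⟩
          one_mem' := ⟨one_mem _, by
            rw [show (⟨(1 : U), one_mem _⟩ : ↥LC) = 1 from rfl, map_one]
            exact one_mem _⟩
          add_mem' := by
            rintro a b ⟨ha, ha'⟩ ⟨hb, hb'⟩
            refine ⟨add_mem ha hb, ?_⟩
            rw [show (⟨a + b, add_mem ha hb⟩ : ↥LC) = ⟨a, ha⟩ + ⟨b, hb⟩ from rfl,
              map_add]
            exact add_mem ha' hb'
          mul_mem' := by
            rintro a b ⟨ha, ha'⟩ ⟨hb, hb'⟩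
            refine ⟨mul_mem ha hb, ?_⟩
            rw [show (⟨a * b, mul_mem ha hb⟩ : ↥LC) = ⟨a, ha⟩ * ⟨b, hb⟩ from rfl,
              map_mul]
            exact mul_mem ha' hb'
          neg_mem' := by
            rintro a ⟨ha, ha'⟩
            refine ⟨neg_mem ha, ?_⟩
            rw [show (⟨-a, neg_mem ha⟩ : ↥LC) = -⟨a, ha⟩ from rfl, map_neg]
            exact neg_mem ha'
          inv_mem' := by
            rintro a ⟨ha, ha'⟩
            refine ⟨inv_mem ha, ?_⟩
            rw [show (⟨a⁻¹, inv_mem ha⟩ : ↥LC) = (⟨a, ha⟩ : ↥LC)⁻¹ from rfl,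
              map_inv₀]
            exact inv_mem ha' }
      have hWle : EC ≤ W := by
        rw [hEC]
        refine Subfield.closure_le.mpr ?_
        rintro u (hu | hu)
        · refine ⟨hELC hu, ?_⟩
          have := hfE ⟨u, hu⟩
          rwa [hfapp] at this
        · refine ⟨hCULC hu, ?_⟩
          have hu0 : D ((⟨u, hCULC hu⟩ : ↥LC) : U) = ((0 : ↥LC) : U) := by
            simpa using (hCU u).mp hu
          have := hσinvd ⟨u, hCULC hu⟩ 0 hu0
          rw [map_zero] at this
          have h0 : D ((σ⁻¹ (⟨u, hCULC hu⟩ : ↥LC) : ↥LC) : U) = 0 := by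
            simpa using this
          exact hCUEC ((hCU _).mpr h0)
      intro x hx
      obtain ⟨h, h'⟩ := hWle hx
      convert h' using 3
    refine ⟨fun x y h => hσd _ _ (hτd _ _ (hσinvd x y h)), fun x hx => ?_⟩
    show σ (τ (σ⁻¹ x)) = x
    rw [hτf (σ⁻¹ x) (key x hx)]
    exact σ.apply_symm_apply x
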